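/- arXiv:1704.00191 — 3 statements merged into one kernel-verified Lean document; each statement's English description precedes it below -/
import Mathlib

section
/- Let M_R be a module and (σ,δ) a quasi-derivation of R. The following are equivalent: (1) for any subset U of M[x;σ,δ], (r_{R[x;σ,δ]}(U) ∩ R)[x;σ,δ] = r_{R[x;σ,δ]}(U); (2) for any m(x) = Σ_{i=0}^p m_i x^i ∈ M[x;σ,δ] and f(x) = Σ_{j=0}^q a_j x^j ∈ R[x;σ,δ], m(x)f(x) = 0 implies Σ_{ℓ=i}^p m_ℓ f_i^ℓ(a_j) = 0 for all i, j. -/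
open MulOpposite

/-- `fw σ δ i j` is `f_i^j`, the sum of all words in `σ`, `δ` built with `i` factors of `σ`
and `j - i` factors of `δ`. -/
def fw {R : Type*} [Ring R] (σ δ : R → R) : ℕ → ℕ → R → R
  | 0, 0 => id
  | _ + 1, 0 => fun _ => 0
  | 0, j + 1 => fun a => δ (fw σ δ 0 j a)
  | i + 1, j + 1 => fun a => σ (fw σ δ i j a) + δ (fw σ δ (i + 1) j a)

/-- Multiplication of the Ore extension `R[x;σ,δ]`, on coefficient sequences. -/
noncomputable def skewMul {R : Type*} [Ring R] (σ δ : R → R) (p q : ℕ →₀ R) : ℕ →₀ R :=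
  p.sum fun j a => q.sum fun l b =>
    ∑ i ∈ Finset.range (j + 1), Finsupp.single (i + l) (a * fw σ δ i j b)

/-- The action of `R[x;σ,δ]` on the skew polynomial module `M[x;σ,δ]`, where `M` is a
right `R`-module (a module over `Rᵐᵒᵖ`): `(m x^j)·(b x^l) = Σ_{i≤j} (m·f_i^j(b)) x^{i+l}`. -/
noncomputable def skewSMul {R : Type*} [Ring R] (σ δ : R → R) {M : Type*} [AddCommGroup M]
    [Module Rᵐᵒᵖ M] (m : ℕ →₀ M) (q : ℕ →₀ R) : ℕ →₀ M :=
  m.sum fun j mm => q.sum fun l b =>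
    ∑ i ∈ Finset.range (j + 1), Finsupp.single (i + l) (op (fw σ δ i j b) • mm)

/-- A right `R`-module `M` is `(σ,δ)`-skew McCoy if whenever `m(x) g(x) = 0` in `M[x;σ,δ]`
with `g(x) ≠ 0`, there is a nonzero `a ∈ R` with `m(x) a = 0`. -/
def IsSkewMcCoy {R : Type*} [Ring R] (σ δ : R → R) (M : Type*) [AddCommGroup M]
    [Module Rᵐᵒᵖ M] : Prop :=
  ∀ (m : ℕ →₀ M) (g : ℕ →₀ R), g ≠ 0 → skewSMul σ δ m g = 0 →
    ∃ a : R, a ≠ 0 ∧ skewSMul σ δ m (Finsupp.single 0 a) = 0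

/-- A right `R`-module `M` is `(σ,δ)`-skew Armendariz if `m(x) g(x) = 0` implies
`(m_i x^i)(b_j x^j) = 0` for all `i, j`. -/
def IsSkewArmendariz {R : Type*} [Ring R] (σ δ : R → R) (M : Type*) [AddCommGroup M]
    [Module Rᵐᵒᵖ M] : Prop :=
  ∀ (m : ℕ →₀ M) (g : ℕ →₀ R), skewSMul σ δ m g = 0 →
    ∀ i j, skewSMul σ δ (Finsupp.single i (m i)) (Finsupp.single j (g j)) = 0

/-- `σ`-compatibility of a right module: `m a = 0 ↔ m σ(a) = 0`. -/
def SigmaCompatible {R : Type*} [Ring R] (σ : R → R) (M : Type*) [AddCommGroup M]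
    [Module Rᵐᵒᵖ M] : Prop :=
  ∀ (m : M) (a : R), op a • m = 0 ↔ op (σ a) • m = 0

/-- `δ`-compatibility of a right module: `m a = 0 → m δ(a) = 0`. -/
def DeltaCompatible {R : Type*} [Ring R] (δ : R → R) (M : Type*) [AddCommGroup M]
    [Module Rᵐᵒᵖ M] : Prop :=
  ∀ (m : M) (a : R), op a • m = 0 → op (δ a) • m = 0

/-- A right module `M` is reduced if `m a = 0` implies `mR ∩ Ma = 0`. -/
def IsReducedModule {R : Type*} [Ring R] (M : Type*) [AddCommGroup M]
    [Module Rᵐᵒᵖ M] : Prop :=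
  ∀ (m : M) (a : R), op a • m = 0 →
    ∀ x : M, (∃ r : R, op r • m = x) → (∃ m' : M, op a • m' = x) → x = 0

/-- Condition `(*)`: `m(x) f(x) = 0` implies `m(x) R f(x) = 0`. -/
def StarCondition {R : Type*} [Ring R] (σ δ : R → R) (M : Type*) [AddCommGroup M]
    [Module Rᵐᵒᵖ M] : Prop :=
  ∀ (m : ℕ →₀ M) (f : ℕ →₀ R), skewSMul σ δ m f = 0 →
    ∀ r : R, skewSMul σ δ m (skewMul σ δ (Finsupp.single 0 r) f) = 0

section Aux
variable {R : Type*} [Ring R] {σ δ : R → R}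
  {M : Type*} [AddCommGroup M] [Module Rᵐᵒᵖ M]

lemma fw_zero (hσ0 : σ 0 = 0) (hδ0 : δ 0 = 0) : ∀ i j : ℕ, fw σ δ i j (0 : R) = 0 := by
  intro i j
  induction j generalizing i with
  | zero => cases i <;> simp [fw]
  | succ j ih =>
    cases i with
    | zero => simp [fw, ih, hδ0]
    | succ i => simp [fw, ih, hσ0, hδ0]

lemma skew_step (hσ0 : σ 0 = 0) (hδ0 : δ 0 = 0) (a : R) (j : ℕ) (mm : M) :
    ((Finsupp.single 0 a).sum fun l b =>
        ∑ i' ∈ Finset.range (j + 1), Finsupp.single (i' + l) (op (fw σ δ i' j b) • mm)) =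
      ∑ i' ∈ Finset.range (j + 1), Finsupp.single (i' + 0) (op (fw σ δ i' j a) • mm) := by
  refine Finsupp.sum_single_index ?_
  refine Finset.sum_eq_zero fun i' _ => ?_
  rw [fw_zero hσ0 hδ0]
  simp

lemma skewSMul_single_zero_apply (hσ0 : σ 0 = 0) (hδ0 : δ 0 = 0) (m : ℕ →₀ M) (a : R) (i : ℕ) :
    skewSMul σ δ m (Finsupp.single 0 a) i =
      ∑ ℓ ∈ m.support.filter (fun ℓ => i ≤ ℓ), op (fw σ δ i ℓ a) • m ℓ := by
  unfold skewSMul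
  rw [Finsupp.sum_apply, Finsupp.sum, Finset.sum_filter]
  refine Finset.sum_congr rfl fun j _ => ?_
  rw [skew_step hσ0 hδ0, Finset.sum_apply']
  simp only [add_zero, Finsupp.single_apply]
  rw [Finset.sum_ite_eq' (Finset.range (j + 1)) i (fun i' => op (fw σ δ i' j a) • m j)]
  simp [Nat.lt_succ_iff]

lemma skewSMul_single_zero_eq_zero_iff (hσ0 : σ 0 = 0) (hδ0 : δ 0 = 0) (m : ℕ →₀ M) (a : R) :
    skewSMul σ δ m (Finsupp.single 0 a) = 0 ↔
      ∀ i : ℕ, ∑ ℓ ∈ m.support.filter (fun ℓ => i ≤ ℓ), op (fw σ δ i ℓ a) • m ℓ = 0 := by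
  rw [Finsupp.ext_iff]
  exact forall_congr' fun i => by
    rw [skewSMul_single_zero_apply hσ0 hδ0, Finsupp.zero_apply]

lemma skewSMul_eq_zero_of_coeffs (hσ0 : σ 0 = 0) (hδ0 : δ 0 = 0) (m : ℕ →₀ M) (f : ℕ →₀ R)
    (h : ∀ j : ℕ, skewSMul σ δ m (Finsupp.single 0 (f j)) = 0) :
    skewSMul σ δ m f = 0 := by
  unfold skewSMul
  rw [Finsupp.sum_comm, Finsupp.sum]
  refine Finset.sum_eq_zero fun l _ => ?_
  have hb := h l
  unfold skewSMul at hb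
  rw [show (m.sum fun j mm =>
        (Finsupp.single 0 (f l)).sum fun l' b =>
          ∑ i' ∈ Finset.range (j + 1), Finsupp.single (i' + l') (op (fw σ δ i' j b) • mm)) =
      m.sum fun j mm =>
        ∑ i' ∈ Finset.range (j + 1), Finsupp.single (i' + 0) (op (fw σ δ i' j (f l)) • mm) from
    Finset.sum_congr rfl fun j _ => skew_step hσ0 hδ0 (f l) j (m j)] at hb
  show (m.sum fun j mm =>
      ∑ i' ∈ Finset.range (j + 1), Finsupp.single (i' + l) (op (fw σ δ i' j (f l)) • mm)) = 0
  have key : (m.sum fun j mm =>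
      ∑ i' ∈ Finset.range (j + 1), Finsupp.single (i' + l) (op (fw σ δ i' j (f l)) • mm)) =
      (Finsupp.mapDomain.addMonoidHom (· + l) : (ℕ →₀ M) →+ (ℕ →₀ M))
        (m.sum fun j mm =>
          ∑ i' ∈ Finset.range (j + 1), Finsupp.single (i' + 0) (op (fw σ δ i' j (f l)) • mm)) := by
    rw [map_finsuppSum]
    refine Finset.sum_congr rfl fun j _ => ?_
    dsimp only
    rw [map_sum]
    refine Finset.sum_congr rfl fun i' _ => ?_
    rw [Finsupp.mapDomain.addMonoidHom_apply, Finsupp.mapDomain_single]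
    simp
  rw [key, hb, map_zero]

end Aux

/-- The following are equivalent: (1) for any `U ⊆ M[x;σ,δ]`,
`(r_{R[x;σ,δ]}(U) ∩ R)[x;σ,δ] = r_{R[x;σ,δ]}(U)`; (2) whenever `m(x) f(x) = 0`,
`Σ_{ℓ≥i} m_ℓ f_i^ℓ(a_j) = 0` for all `i, j`. -/
theorem annihilator_closed_iff {R : Type*} [Ring R] (σ : R →+* R) (δ : R → R)
    (hδadd : ∀ a b : R, δ (a + b) = δ a + δ b)
    (hδmul : ∀ a b : R, δ (a * b) = σ a * δ b + δ a * b)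
    (M : Type*) [AddCommGroup M] [Module Rᵐᵒᵖ M] :
    (∀ U : Set (ℕ →₀ M),
        {f : ℕ →₀ R | ∀ u ∈ U, skewSMul ⇑σ δ u f = 0} =
          {f : ℕ →₀ R | ∀ j : ℕ, ∀ u ∈ U, skewSMul ⇑σ δ u (Finsupp.single 0 (f j)) = 0}) ↔
      (∀ (m : ℕ →₀ M) (f : ℕ →₀ R), skewSMul ⇑σ δ m f = 0 → ∀ i j : ℕ,
        ∑ ℓ ∈ m.support.filter (fun ℓ => i ≤ ℓ), op (fw ⇑σ δ i ℓ (f j)) • m ℓ = 0) := by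
  
  have hσ0 : (⇑σ) (0:R) = 0 := map_zero σ
  have hδ0 : δ (0:R) = 0 := by
    have h := hδadd 0 0
    rw [add_zero] at h
    exact (left_eq_add.mp h)
  constructor
  · intro H m f hmf i j
    have hm : f ∈ {f : ℕ →₀ R | ∀ u ∈ ({m} : Set (ℕ →₀ M)), skewSMul ⇑σ δ u f = 0} := by
      intro u hu
      rw [Set.mem_singleton_iff] at hu
      subst hu
      exact hmf
    rw [H {m}] at hm
    exact (skewSMul_single_zero_eq_zero_iff hσ0 hδ0 m (f j)).mp (hm j m rfl) i
  · intro H U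
    ext g
    simp only [Set.mem_setOf_eq]
    constructor
    · intro h j u hu
      exact (skewSMul_single_zero_eq_zero_iff hσ0 hδ0 u (g j)).mpr
        (fun i => H u g (h u hu) i j)
    · intro h u hu
      exact skewSMul_eq_zero_of_coeffs hσ0 hδ0 u g (fun j => h j u hu)
end

section
/- Suppose M_R is reduced and (σ,δ)-compatible. If m(x) = Σ_{i=0}^p m_i x^i ∈ M[x;σ,δ] and f(x) = Σ_{j=0}^q a_j x^j ∈ R[x;σ,δ] satisfy m(x)f(x) = 0, then m_i a_j = 0 for all i, j. -/
open MulOpposite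

section Aux

variable {R : Type*} [Ring R] (σ : R →+* R) (δ : R → R)

lemma fw_eq_zero (hδ0 : δ 0 = 0) : ∀ j i, j < i → ∀ a : R, fw ⇑σ δ i j a = 0 := by
  intro j
  induction j with
  | zero =>
    rintro (_ | i) h a
    · omega
    · rfl
  | succ j IH =>
    rintro (_ | i) h a
    · omega
    · show σ (fw ⇑σ δ i j a) + δ (fw ⇑σ δ (i + 1) j a) = 0
      rw [IH i (by omega) a, IH (i + 1) (by omega) a, map_zero, hδ0, add_zero]

lemma fw_map_zero (hδ0 : δ 0 = 0) : ∀ j i, fw ⇑σ δ i j (0 : R) = 0 := by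
  intro j
  induction j with
  | zero =>
    rintro (_ | i)
    · rfl
    · rfl
  | succ j IH =>
    rintro (_ | i)
    · show δ (fw ⇑σ δ 0 j (0 : R)) = 0
      rw [IH 0, hδ0]
    · show σ (fw ⇑σ δ i j (0:R)) + δ (fw ⇑σ δ (i + 1) j (0:R)) = 0
      rw [IH i, IH (i + 1), map_zero, hδ0, add_zero]

lemma fw_diag (hδ0 : δ 0 = 0) : ∀ j (a : R), fw ⇑σ δ j j a = σ^[j] a := by
  intro j
  induction j with
  | zero => intro a; rfl
  | succ j IH =>
    intro a
    show σ (fw ⇑σ δ j j a) + δ (fw ⇑σ δ (j + 1) j a) = σ^[j+1] a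
    rw [IH, fw_eq_zero σ δ hδ0 j (j+1) (by omega), hδ0, add_zero,
      Function.iterate_succ_apply']

variable {M : Type*} [AddCommGroup M] [Module Rᵐᵒᵖ M]

lemma compat_iter (hσ : SigmaCompatible ⇑σ M) (m : M) (a : R) :
    ∀ t : ℕ, (op a • m = 0 ↔ op (σ^[t] a) • m = 0) := by
  intro t
  induction t with
  | zero => rfl
  | succ t IH =>
    rw [Function.iterate_succ_apply', ← hσ m (σ^[t] a)]
    exact IH

lemma compat_fw (hσ : SigmaCompatible ⇑σ M) (hδc : DeltaCompatible δ M)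
    {m : M} {a : R} (h : op a • m = 0) :
    ∀ j i, op (fw ⇑σ δ i j a) • m = 0 := by
  intro j
  induction j with
  | zero =>
    rintro (_ | i)
    · exact h
    · show op (0 : R) • m = 0
      rw [op_zero, zero_smul]
  | succ j IH =>
    rintro (_ | i)
    · show op (δ (fw ⇑σ δ 0 j a)) • m = 0
      exact hδc m _ (IH 0)
    · show op (σ (fw ⇑σ δ i j a) + δ (fw ⇑σ δ (i + 1) j a)) • m = 0
      rw [op_add, add_smul, (hσ m _).mp (IH i), hδc m _ (IH (i + 1)), add_zero]

lemma semicomm (hred : IsReducedModule (R := R) M) {m : M} {a : R}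
    (h : op a • m = 0) (r : R) : op a • (op r • m) = 0 := by
  refine hred m a h _ ⟨r * a, ?_⟩ ⟨op r • m, rfl⟩
  rw [op_mul, mul_smul]

lemma reduced_sq (hred : IsReducedModule (R := R) M) {m : M} {a : R}
    (h : op a • (op a • m) = 0) : op a • m = 0 :=
  hred (op a • m) a h (op a • m) ⟨1, by simp⟩ ⟨m, rfl⟩

lemma cancel_iter (hred : IsReducedModule (R := R) M) (hσ : SigmaCompatible ⇑σ M)
    {m : M} {a : R} (t : ℕ) (h : op a • (op (σ^[t] a) • m) = 0) : op a • m = 0 := by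
  have h1 : op (σ^[t] a) • (op (σ^[t] a) • m) = 0 := (compat_iter σ hσ _ a t).mp h
  exact (compat_iter σ hσ m a t).mpr (reduced_sq hred h1)

lemma skewSMul_apply (hδ0 : δ 0 = 0) (m : ℕ →₀ M) (f : ℕ →₀ R) (N n : ℕ)
    (hm : ∀ i, N ≤ i → m i = 0) (hf : ∀ j, N ≤ j → f j = 0) :
    skewSMul ⇑σ δ m f n =
      ∑ j ∈ Finset.range N, ∑ l ∈ Finset.range N, ∑ i ∈ Finset.range (j + 1),
        (if i + l = n then op (fw ⇑σ δ i j (f l)) • m j else 0) := by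
  rw [skewSMul]
  rw [Finsupp.sum_of_support_subset m (s := Finset.range N)
    (fun j hj => Finset.mem_range.mpr (by by_contra hc; exact (Finsupp.mem_support_iff.mp hj) (hm j (by omega))))
    _ (fun j _ => by simp [Finsupp.sum])]
  rw [Finset.sum_apply']
  refine Finset.sum_congr rfl fun j hj => ?_
  rw [Finsupp.sum_of_support_subset f (s := Finset.range N)
    (fun l hl => Finset.mem_range.mpr (by by_contra hc; exact (Finsupp.mem_support_iff.mp hl) (hf l (by omega))))
    _ (fun l _ => by simp [fw_map_zero σ δ hδ0])]
  rw [Finset.sum_apply']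
  refine Finset.sum_congr rfl fun l hl => ?_
  rw [Finset.sum_apply']
  refine Finset.sum_congr rfl fun i hi => ?_
  rw [Finsupp.single_apply]

end Aux

/-- If `M_R` is reduced and `(σ,δ)`-compatible, then `m(x) f(x) = 0` implies `m_i a_j = 0`
for all `i, j`. -/
theorem reduced_compatible_coeffs {R : Type*} [Ring R] (σ : R →+* R) (δ : R → R)
    (hδadd : ∀ a b : R, δ (a + b) = δ a + δ b)
    (hδmul : ∀ a b : R, δ (a * b) = σ a * δ b + δ a * b)
    (M : Type*) [AddCommGroup M] [Module Rᵐᵒᵖ M]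
    (hred : IsReducedModule (R := R) M)
    (hσ : SigmaCompatible ⇑σ M) (hδc : DeltaCompatible δ M) :
    ∀ (m : ℕ →₀ M) (f : ℕ →₀ R), skewSMul ⇑σ δ m f = 0 →
      ∀ i j : ℕ, op (f j) • m i = 0 := by
  have hδ0 : δ 0 = 0 := by
    have h := hδadd 0 0
    rw [zero_add] at h
    exact left_eq_add.mp h
  intro m f hmf
  -- a common bound for the supports
  set N : ℕ := (m.support.sup id) + (f.support.sup id) + 1 with hNdef
  have hm : ∀ i, N ≤ i → m i = 0 := by
    intro i hi
    by_contra hc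
    have := Finset.le_sup (f := id) (Finsupp.mem_support_iff.mpr hc)
    simp only [id] at this
    omega
  have hf : ∀ j, N ≤ j → f j = 0 := by
    intro j hj
    by_contra hc
    have := Finset.le_sup (f := id) (Finsupp.mem_support_iff.mpr hc)
    simp only [id] at this
    omega
  have key : ∀ d : ℕ, ∀ i j : ℕ, N + N ≤ i + j + d → op (f j) • m i = 0 := by
    intro d
    induction d with
    | zero =>
      intro i j h
      rcases (by omega : N ≤ i ∨ N ≤ j) with h' | h'
      · rw [hm i h', smul_zero]
      · rw [hf j h', op_zero, zero_smul]
    | succ d IH =>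
      intro i j h
      by_cases hc : N + N ≤ i + j + d
      · exact IH i j hc
      set n := i + j with hn_def
      -- outer induction hypothesis in convenient form
      have hn : ∀ i' j' : ℕ, n + 1 ≤ i' + j' → op (f j') • m i' = 0 := by
        intro i' j' h'
        exact IH i' j' (by omega)
      -- the coefficient of x^n in m(x)f(x)
      have H0 : ∑ j' ∈ Finset.range (N + n + 1), ∑ l ∈ Finset.range (N + n + 1),
          ∑ i' ∈ Finset.range (j' + 1),
            (if i' + l = n then op (fw ⇑σ δ i' j' (f l)) • m j' else 0) = 0 := by
        rw [← skewSMul_apply σ δ hδ0 m f (N + n + 1) n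
          (fun i' hi' => hm i' (by omega)) (fun j' hj' => hf j' (by omega)), hmf]
        rfl
      -- collapse to the diagonal terms
      have Hn : ∑ j' ∈ Finset.range (n + 1), op (σ^[j'] (f (n - j'))) • m j' = 0 := by
        rw [← H0]
        have e1 : ∀ j' ∈ Finset.range (N + n + 1),
            (∑ l ∈ Finset.range (N + n + 1), ∑ i' ∈ Finset.range (j' + 1),
              (if i' + l = n then op (fw ⇑σ δ i' j' (f l)) • m j' else 0)) =
            (if j' ≤ n then op (σ^[j'] (f (n - j'))) • m j' else 0) := by
          intro j' _
          have e2 : ∀ l ∈ Finset.range (N + n + 1),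
              (∑ i' ∈ Finset.range (j' + 1),
                (if i' + l = n then op (fw ⇑σ δ i' j' (f l)) • m j' else 0)) =
              (if j' + l = n then op (σ^[j'] (f l)) • m j' else 0) := by
            intro l _
            by_cases hjl : j' + l = n
            · rw [if_pos hjl, Finset.sum_eq_single j']
              · rw [if_pos hjl, fw_diag σ δ hδ0]
              · intro i' hi' hne
                rw [if_neg (by simp only [Finset.mem_range] at hi'; omega)]
              · intro hj'
                exact absurd (Finset.mem_range.mpr (by omega)) hj'
            · rw [if_neg hjl]
              refine Finset.sum_eq_zero fun i' hi' => ?_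
              simp only [Finset.mem_range] at hi'
              by_cases hil : i' + l = n
              · rw [if_pos hil]
                exact compat_fw σ δ hσ hδc (hn j' l (by omega)) j' i'
              · rw [if_neg hil]
          rw [Finset.sum_congr rfl e2]
          by_cases hjn : j' ≤ n
          · rw [if_pos hjn, Finset.sum_eq_single (n - j')]
            · rw [if_pos (by omega)]
            · intro l hl hne
              rw [if_neg (by omega)]
            · intro hl
              exact absurd (Finset.mem_range.mpr (by omega)) hl
          · rw [if_neg hjn]
            refine Finset.sum_eq_zero fun l hl => ?_
            rw [if_neg (by omega)]
        rw [Finset.sum_congr rfl e1, ← Finset.sum_filter]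
        refine Finset.sum_congr ?_ fun _ _ => rfl
        ext x
        simp only [Finset.mem_filter, Finset.mem_range]
        omega
      -- inner induction
      have claim : ∀ t : ℕ, t ≤ n → op (f (n - t)) • m t = 0 := by
        intro t
        induction t using Nat.strong_induction_on with
        | _ t IHt =>
          intro ht
          have H2 : ∑ j' ∈ Finset.range (n + 1),
              op (f (n - t)) • (op (σ^[j'] (f (n - j'))) • m j') = 0 := by
            rw [← Finset.smul_sum, Hn, smul_zero]
          have H3 : op (f (n - t)) • (op (σ^[t] (f (n - t))) • m t) = 0 := by
            rw [← H2, Finset.sum_eq_single t]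
            · intro j' hj' hne
              simp only [Finset.mem_range] at hj'
              rcases lt_or_gt_of_ne hne with hlt | hgt
              · rw [(compat_iter σ hσ (m j') (f (n - j')) j').mp
                  (IHt j' hlt (by omega)), smul_zero]
              · exact semicomm hred (hn j' (n - t) (by omega)) _
            · intro ht'
              exact absurd (Finset.mem_range.mpr (by omega)) ht'
          exact cancel_iter σ hred hσ t H3
      have := claim i (by omega)
      rwa [(by omega : n - i = j)] at this
  exact fun i j => key (N + N) i j (by omega)
end

section
/- Every (σ,δ)-compatible reduced module is (σ,δ)-skew Armendariz. -/
open MulOpposite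

section Aux
variable {R : Type*} [Ring R] {σ : R →+* R} {δ : R → R}

lemma fw_apply_zero (hδ0 : δ (0:R) = 0) : ∀ j i, fw (⇑σ) δ i j (0:R) = 0 := by
  intro j
  induction j with
  | zero => rintro (_|i) <;> rfl
  | succ j ih =>
    rintro (_|i)
    · show δ (fw (⇑σ) δ 0 j 0) = 0
      rw [ih 0, hδ0]
    · show σ (fw (⇑σ) δ i j 0) + δ (fw (⇑σ) δ (i+1) j 0) = 0
      rw [ih, ih, map_zero, hδ0, add_zero]

lemma fw_gt (hδ0 : δ (0:R) = 0) : ∀ j i, j < i → ∀ a : R, fw (⇑σ) δ i j a = 0 := by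
  intro j
  induction j with
  | zero =>
    rintro (_|i) h a
    · omega
    · rfl
  | succ j ih =>
    rintro (_|i) h a
    · omega
    · show σ (fw (⇑σ) δ i j a) + δ (fw (⇑σ) δ (i+1) j a) = 0
      rw [ih i (by omega) a, ih (i+1) (by omega) a, map_zero, hδ0, add_zero]

lemma fw_diag_succ (hδ0 : δ (0:R) = 0) (j : ℕ) (a : R) :
    fw (⇑σ) δ (j+1) (j+1) a = σ (fw (⇑σ) δ j j a) := by
  show σ (fw (⇑σ) δ j j a) + δ (fw (⇑σ) δ (j+1) j a) = _
  rw [fw_gt hδ0 j (j+1) (by omega) a, hδ0, add_zero]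

variable {M : Type*} [AddCommGroup M] [Module Rᵐᵒᵖ M]

lemma compat_word (hσ : SigmaCompatible ⇑σ M) (hδc : DeltaCompatible δ M)
    {mm : M} {a : R} (h : op a • mm = 0) : ∀ j i, op (fw (⇑σ) δ i j a) • mm = 0 := by
  intro j
  induction j with
  | zero =>
    rintro (_|i)
    · exact h
    · show op (0:R) • mm = 0
      rw [op_zero, zero_smul]
  | succ j ih =>
    rintro (_|i)
    · show op (δ (fw (⇑σ) δ 0 j a)) • mm = 0
      exact hδc mm _ (ih 0)
    · show op (σ (fw (⇑σ) δ i j a) + δ (fw (⇑σ) δ (i+1) j a)) • mm = 0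
      rw [op_add, add_smul, (hσ mm _).mp (ih i), hδc mm _ (ih (i+1)), add_zero]

lemma compat_diag (hσ : SigmaCompatible ⇑σ M) (hδ0 : δ (0:R) = 0) (mm : M) (a : R) :
    ∀ t, (op a • mm = 0 ↔ op (fw (⇑σ) δ t t a) • mm = 0) := by
  intro t
  induction t with
  | zero => exact Iff.rfl
  | succ t ih => rw [fw_diag_succ hδ0, ih]; exact hσ mm _

lemma red_mul (hred : IsReducedModule (R := R) M) {mm : M} {a : R}
    (h : op a • mm = 0) (r : R) : op (r * a) • mm = 0 := by
  refine hred mm a h (op (r * a) • mm) ⟨r * a, rfl⟩ ⟨op r • mm, ?_⟩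
  rw [smul_smul, ← op_mul]

lemma red_sq (hred : IsReducedModule (R := R) M) {mm : M} {a : R}
    (h : op (a * a) • mm = 0) : op a • mm = 0 := by
  have h' : op a • (op a • mm) = 0 := by rw [smul_smul, ← op_mul]; exact h
  exact hred (op a • mm) a h' (op a • mm) ⟨1, by simp⟩ ⟨mm, rfl⟩

lemma sum_ite_shift {α : Type*} [AddCommMonoid α] (B j n : ℕ) (X : ℕ → α)
    (hX : ∀ l, B ≤ l → X l = 0) :
    (∑ l ∈ Finset.range B, if j + l = n then X l else 0)
      = if j ≤ n then X (n - j) else 0 := by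
  by_cases hj : j ≤ n
  · have hcond : ∀ l, (j + l = n) = (l = n - j) := fun l => by
      apply propext; omega
    simp_rw [hcond]
    rw [Finset.sum_ite_eq' (Finset.range B) (n - j) X]
    by_cases h : n - j ∈ Finset.range B
    · rw [if_pos h, if_pos hj]
    · rw [if_neg h, if_pos hj, hX (n - j) (by simpa [Finset.mem_range] using h)]
  · rw [if_neg hj]
    apply Finset.sum_eq_zero
    intro l _
    rw [if_neg (by omega)]
end Aux

lemma main_key {R : Type*} [Ring R] (σ : R →+* R) (δ : R → R)
    (hδ0 : δ (0:R) = 0)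
    {M : Type*} [AddCommGroup M] [Module Rᵐᵒᵖ M]
    (hred : IsReducedModule (R := R) M)
    (hσ : SigmaCompatible ⇑σ M) (hδc : DeltaCompatible δ M)
    (m : ℕ →₀ M) (g : ℕ →₀ R) (hmg : skewSMul ⇑σ δ m g = 0) :
    ∀ j l, op (g l) • m j = 0 := by
  set B := (m.support ∪ g.support).sup id + 1 with hBdef
  have hmB : ∀ k, B ≤ k → m k = 0 := by
    intro k hk
    by_contra h
    have hk1 : k ∈ m.support ∪ g.support :=
      Finset.mem_union_left _ (Finsupp.mem_support_iff.2 h)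
    have h2 : id k ≤ (m.support ∪ g.support).sup id := Finset.le_sup hk1
    simp only [id] at h2
    omega
  have hgB : ∀ k, B ≤ k → g k = 0 := by
    intro k hk
    by_contra h
    have hk1 : k ∈ m.support ∪ g.support :=
      Finset.mem_union_right _ (Finsupp.mem_support_iff.2 h)
    have h2 : id k ≤ (m.support ∪ g.support).sup id := Finset.le_sup hk1
    simp only [id] at h2
    omega
  have hmsup : m.support ⊆ Finset.range B := by
    intro k hk
    rw [Finset.mem_range]
    by_contra h
    exact (Finsupp.mem_support_iff.1 hk) (hmB k (by omega))
  have hgsup : g.support ⊆ Finset.range B := by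
    intro k hk
    rw [Finset.mem_range]
    by_contra h
    exact (Finsupp.mem_support_iff.1 hk) (hgB k (by omega))
  have hexp : skewSMul ⇑σ δ m g =
      ∑ j ∈ Finset.range B, ∑ l ∈ Finset.range B, ∑ i ∈ Finset.range (j+1),
        Finsupp.single (i+l) (op (fw (⇑σ) δ i j (g l)) • m j) := by
    rw [skewSMul]
    rw [Finsupp.sum_of_support_subset m hmsup _ (fun j _ => by simp [Finsupp.sum])]
    refine Finset.sum_congr rfl fun j _ => ?_
    rw [Finsupp.sum_of_support_subset g hgsup _ (fun l _ => by
      simp [fw_apply_zero hδ0])]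
  have hcoef : ∀ n, ∑ j ∈ Finset.range B, ∑ l ∈ Finset.range B, ∑ i ∈ Finset.range (j+1),
      (if i + l = n then op (fw (⇑σ) δ i j (g l)) • m j else 0) = 0 := by
    intro n
    have h0 : (∑ j ∈ Finset.range B, ∑ l ∈ Finset.range B, ∑ i ∈ Finset.range (j+1),
        Finsupp.single (i+l) (op (fw (⇑σ) δ i j (g l)) • m j) : ℕ →₀ M) n = 0 := by
      rw [← hexp, hmg]; rfl
    simpa [Finset.sum_apply', Finsupp.single_apply] using h0
  have key : ∀ d n, 2*B ≤ n + d → ∀ j l, j + l = n → op (g l) • m j = 0 := by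
    intro d
    induction d with
    | zero =>
      intro n hn j l hjl
      rcases (show B ≤ j ∨ B ≤ l by omega) with h | h
      · rw [hmB j h, smul_zero]
      · rw [hgB l h, op_zero, zero_smul]
    | succ d ih =>
      intro n hn j l hjl
      by_cases hjB : B ≤ j
      · rw [hmB j hjB, smul_zero]
      by_cases hlB : B ≤ l
      · rw [hgB l hlB, op_zero, zero_smul]
      have ihgt : ∀ j' l', n < j' + l' → op (g l') • m j' = 0 :=
        fun j' l' h => ih (j' + l') (by omega) j' l' rfl
      -- clean the coefficient equation
      have hc1 : ∑ j ∈ Finset.range B,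
          (if j ≤ n then op (fw (⇑σ) δ j j (g (n-j))) • m j else 0) = 0 := by
        have step : ∑ j ∈ Finset.range B, ∑ l ∈ Finset.range B, ∑ i ∈ Finset.range (j+1),
            (if i + l = n then op (fw (⇑σ) δ i j (g l)) • m j else 0)
            = ∑ j ∈ Finset.range B,
                (if j ≤ n then op (fw (⇑σ) δ j j (g (n-j))) • m j else 0) := by
          refine Finset.sum_congr rfl fun j hj => ?_
          have e1 : ∀ l ∈ Finset.range B,
              (∑ i ∈ Finset.range (j+1),
                if i + l = n then op (fw (⇑σ) δ i j (g l)) • m j else 0)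
                = (if j + l = n then op (fw (⇑σ) δ j j (g l)) • m j else 0) := by
            intro l _
            rw [Finset.sum_range_succ]
            have hz : ∑ i ∈ Finset.range j,
                (if i + l = n then op (fw (⇑σ) δ i j (g l)) • m j else 0) = 0 := by
              apply Finset.sum_eq_zero
              intro i hi
              rw [Finset.mem_range] at hi
              split_ifs with h
              · exact compat_word hσ hδc (ihgt j l (by omega)) j i
              · rfl
            rw [hz, zero_add]
          rw [Finset.sum_congr rfl e1]
          exact sum_ite_shift B j n _ (fun l hl => by
            rw [hgB l hl, fw_apply_zero hδ0, op_zero, zero_smul])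
        rw [← step]
        exact hcoef n
      -- inner descending argument
      have hinner : ∀ s t, B ≤ t + s →
          (∑ j ∈ Finset.Ico t B,
            if j ≤ n then op (fw (⇑σ) δ j j (g (n-j))) • m j else 0) = 0 →
          ∀ j, t ≤ j → j ≤ n → op (g (n - j)) • m j = 0 := by
        intro s
        induction s with
        | zero =>
          intro t ht hsum j htj hjn
          rw [hmB j (by omega), smul_zero]
        | succ s ihs =>
          intro t ht hsum j htj hjn
          by_cases htB : B ≤ t
          · rw [hmB j (by omega), smul_zero]
          by_cases htn : t ≤ n
          swap
          · exact absurd hjn (by omega)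
          set c := fw (⇑σ) δ t t (g (n - t)) with hc
          have hsum2 : ∑ j ∈ Finset.Ico t B,
              (op c • if j ≤ n then op (fw (⇑σ) δ j j (g (n-j))) • m j else 0) = 0 := by
            rw [← Finset.smul_sum, hsum, smul_zero]
          have htmem : t ∈ Finset.Ico t B := Finset.mem_Ico.2 ⟨le_refl t, by omega⟩
          have hothers : ∀ j ∈ Finset.Ico t B, j ≠ t →
              (op c • if j ≤ n then op (fw (⇑σ) δ j j (g (n-j))) • m j else 0) = 0 := by
            intro j hj hne
            have htj' : t < j := lt_of_le_of_ne (Finset.mem_Ico.1 hj).1 (Ne.symm hne)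
            by_cases hjn' : j ≤ n
            · rw [if_pos hjn']
              have h1 : op (g (n - t)) • m j = 0 := ihgt j (n - t) (by omega)
              have h2 : op c • m j = 0 := compat_word hσ hδc h1 t t
              rw [smul_smul, ← op_mul]
              exact red_mul hred h2 _
            · rw [if_neg hjn', smul_zero]
          have hcc : op (c * c) • m t = 0 := by
            have hsingle := Finset.sum_eq_single_of_mem t htmem hothers
            rw [hsingle, if_pos htn, ← hc, smul_smul, ← op_mul] at hsum2
            exact hsum2
          have hct : op c • m t = 0 := red_sq hred hcc
          have hgnt : op (g (n - t)) • m t = 0 := (compat_diag hσ hδ0 (m t) _ t).mpr hct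
          rcases eq_or_lt_of_le htj with rfl | hlt
          · exact hgnt
          · have hsum3 : ∑ j ∈ Finset.Ico (t+1) B,
                (if j ≤ n then op (fw (⇑σ) δ j j (g (n-j))) • m j else 0) = 0 := by
              rw [Finset.sum_eq_sum_Ico_succ_bot (by omega : t < B), if_pos htn] at hsum
              have hct' : op (fw (⇑σ) δ t t (g (n - t))) • m t = 0 := by rw [← hc]; exact hct
              rw [hct', zero_add] at hsum
              exact hsum
            exact ihs (t+1) (by omega) hsum3 j (by omega) hjn
      have hres := hinner B 0 (by omega)
        (by rw [← Finset.range_eq_Ico]; exact hc1) j (Nat.zero_le _) (by omega)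
      have hl : n - j = l := by omega
      rwa [hl] at hres
  intro j l
  exact key (2*B) (j+l) (by omega) j l rfl

/-- Every `(σ,δ)`-compatible and reduced module is `(σ,δ)`-skew Armendariz. -/
theorem compatible_reduced_isSkewArmendariz {R : Type*} [Ring R] (σ : R →+* R) (δ : R → R)
    (hδadd : ∀ a b : R, δ (a + b) = δ a + δ b)
    (hδmul : ∀ a b : R, δ (a * b) = σ a * δ b + δ a * b)
    (M : Type*) [AddCommGroup M] [Module Rᵐᵒᵖ M]
    (hred : IsReducedModule (R := R) M)
    (hσ : SigmaCompatible ⇑σ M) (hδc : DeltaCompatible δ M) :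
    IsSkewArmendariz ⇑σ δ M := by
  have hδ0 : δ (0:R) = 0 := by
    have h := hδadd 0 0
    rw [zero_add] at h
    exact (left_eq_add.mp h)
  intro m g hmg i j
  have key := main_key σ δ hδ0 hred hσ hδc m g hmg
  rw [skewSMul, Finsupp.sum_single_index (by simp [Finsupp.sum]),
      Finsupp.sum_single_index (by simp [fw_apply_zero hδ0])]
  apply Finset.sum_eq_zero
  intro k hk
  rw [compat_word hσ hδc (key i j) i k, Finsupp.single_zero]
end
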